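/- arXiv:1212.3261 — 2 statements merged into one kernel-verified Lean document; each statement's English description precedes it below -/
import Mathlib

section
/- Let B be a commutative monoid with zero and suppose the morphism B → S⁻¹B of localization at a multiplicative subset S admits a finite presentation in the categorical sense (filtered colimits of Hom commute). Then S⁻¹B ≅ B[h⁻¹] for a single element h ∈ B; i.e., S⁻¹B is a finite localization, where the saturation of S is generated by finitely many elements. -/
/-- A bundled commutative monoid with zero. -/
structure CMZCat where
  carrier : Type
  str : CommMonoidWithZero carrier

attribute [instance] CMZCat.str

instance : CoeSort CMZCat Type := ⟨CMZCat.carrier⟩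

/-- A directed system of commutative-monoid-with-zero algebras over `B`, together with
its colimit `L`: every element of `L` comes from some stage, and equality in `L` is
detected at some stage. -/
structure DirSysMZ (B : Type) [CommMonoidWithZero B] where
  ι : Type
  le : ι → ι → Prop
  lrefl : ∀ i, le i i
  ltrans : ∀ {i j k}, le i j → le j k → le i k
  nonmpty : Nonempty ι
  directed : ∀ i j, ∃ k, le i k ∧ le j k
  D : ι → CMZCat
  alg : ∀ i, B →*₀ D i
  tr : ∀ {i j}, le i j → (D i →*₀ D j)
  tr_refl : ∀ i (x : D i), tr (lrefl i) x = x
  tr_trans : ∀ {i j k} (h₁ : le i j) (h₂ : le j k) (x : D i),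
    tr h₂ (tr h₁ x) = tr (ltrans h₁ h₂) x
  tr_alg : ∀ {i j} (h : le i j) (b : B), tr h (alg i b) = alg j b
  L : CMZCat
  algL : B →*₀ L
  incl : ∀ i, D i →*₀ L
  incl_alg : ∀ (i) (b : B), incl i (alg i b) = algL b
  incl_tr : ∀ {i j} (h : le i j) (x : D i), incl j (tr h x) = incl i x
  exists_rep : ∀ x : L, ∃ (i : ι) (y : D i), incl i y = x
  eq_stage : ∀ (i : ι) (x y : D i), incl i x = incl i y →
    ∃ (j : ι) (h : le i j), tr h x = tr h y

/-- A morphism `f : B → C` of commutative monoids with zero is of finite presentation in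
the categorical sense: for every directed system of `B`-algebras, the canonical map
`colim Hom_B(C, Dᵢ) → Hom_B(C, colim Dᵢ)` is bijective (unfolded below into the
standard surjectivity and injectivity conditions). -/
def IsCMZFinitePresentation {B C : Type} [CommMonoidWithZero B] [CommMonoidWithZero C]
    (f : B →*₀ C) : Prop :=
  ∀ s : DirSysMZ B,
    (∀ φ : C →*₀ s.L, (∀ b : B, φ (f b) = s.algL b) →
      ∃ (i : s.ι) (ψ : C →*₀ s.D i),
        (∀ b : B, ψ (f b) = s.alg i b) ∧ ∀ c : C, s.incl i (ψ c) = φ c) ∧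
    (∀ (i : s.ι) (ψ₁ ψ₂ : C →*₀ s.D i),
      (∀ b : B, ψ₁ (f b) = s.alg i b) → (∀ b : B, ψ₂ (f b) = s.alg i b) →
      (∀ c : C, s.incl i (ψ₁ c) = s.incl i (ψ₂ c)) →
      ∃ (j : s.ι) (h : s.le i j), ∀ c : C, s.tr h (ψ₁ c) = s.tr h (ψ₂ c))

/-- The localization map `B → S⁻¹B`, `b ↦ b/1`, as a homomorphism of monoids with
zero. -/
noncomputable def locHomMZ {B : Type} [CommMonoidWithZero B] (S : Submonoid B) :
    B →*₀ Localization S :=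
  { toFun := fun b => Localization.mk b 1
    map_zero' := Localization.mk_zero 1
    map_one' := Localization.mk_one
    map_mul' := fun a b => by rw [Localization.mk_mul, one_mul] }


namespace Stmt17Aux

open Localization

variable {B : Type} [CommMonoidWithZero B]

/-- Functoriality of localization along an inclusion of submonoids. -/
noncomputable def locMap {T U : Submonoid B} (h : T ≤ U) :
    Localization T →*₀ Localization U where
  toFun x := Localization.liftOn x (fun a t => Localization.mk a ⟨t.1, h t.2⟩)
    (fun {a c b d} hr => by
      rw [Localization.mk_eq_mk_iff, Localization.r_iff_exists]
      obtain ⟨e, he⟩ := Localization.r_iff_exists.mp hr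
      exact ⟨⟨e.1, h e.2⟩, he⟩)
  map_zero' := by
    rw [Localization.liftOn_zero]; exact Localization.mk_zero _
  map_one' := by
    rw [← Localization.mk_one, Localization.liftOn_mk, ← Localization.mk_one]
    exact congrArg _ (Subtype.ext rfl)
  map_mul' x y := Localization.induction_on₂ x y (fun p q => by
    rw [Localization.mk_mul, Localization.liftOn_mk, Localization.liftOn_mk,
      Localization.liftOn_mk, Localization.mk_mul]
    exact congrArg _ (Subtype.ext rfl))

@[simp] lemma locMap_mk {T U : Submonoid B} (h : T ≤ U) (a : B) (t : T) :
    locMap h (Localization.mk a t) = Localization.mk a ⟨t.1, h t.2⟩ := rfl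

/-- Two monoid-with-zero homs out of a localization agreeing on images of `B` agree. -/
lemma loc_hom_ext {T : Submonoid B} {M : Type} [CommMonoidWithZero M]
    (f g : Localization T →*₀ M)
    (hfg : ∀ b : B, f (Localization.mk b 1) = g (Localization.mk b 1)) (x : Localization T) :
    f x = g x := by
  refine Localization.induction_on x ?_
  rintro ⟨a, t⟩
  have h1 : Localization.mk (t : B) t = 1 := Localization.mk_self t
  have hmul : Localization.mk (t : B) (1 : T) * Localization.mk 1 t = 1 := by
    rw [Localization.mk_mul, mul_one, one_mul, h1]
  have hf : f (Localization.mk (t : B) 1) * f (Localization.mk 1 t) = 1 := by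
    rw [← map_mul, hmul, map_one]
  have hg : g (Localization.mk (t : B) 1) * g (Localization.mk 1 t) = 1 := by
    rw [← map_mul, hmul, map_one]
  have hinv : f (Localization.mk 1 t) = g (Localization.mk 1 t) := by
    calc f (Localization.mk 1 t) = f (Localization.mk 1 t) *
          (g (Localization.mk (t : B) 1) * g (Localization.mk 1 t)) := by rw [hg, mul_one]
      _ = (f (Localization.mk (t : B) 1) * f (Localization.mk 1 t)) *
          g (Localization.mk 1 t) := by rw [hfg, mul_left_comm, ← mul_assoc]
      _ = g (Localization.mk 1 t) := by rw [hf, one_mul]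
  have hx : Localization.mk a t = Localization.mk a (1 : T) * Localization.mk 1 t := by
    rw [Localization.mk_mul, mul_one, one_mul]
  rw [hx, map_mul, map_mul, hfg, hinv]


variable (S : Submonoid B)

/-- The finitely generated submonoid attached to a finite set of elements of `S`. -/
def TT (F : Finset S) : Submonoid B := Submonoid.closure (Subtype.val '' (↑F : Set S))

lemma TT_le_S (F : Finset S) : TT S F ≤ S := by
  rw [TT, Submonoid.closure_le]
  rintro x ⟨y, -, rfl⟩
  exact y.2

lemma TT_mono {F G : Finset S} (h : F ⊆ G) : TT S F ≤ TT S G :=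
  Submonoid.closure_mono (Set.image_mono (Finset.coe_subset.mpr h))

open scoped Classical in
/-- The directed system of localizations at finitely generated submonoids of `S`. -/
noncomputable def sys : DirSysMZ B where
  ι := Finset S
  le F G := F ⊆ G
  lrefl F := Finset.Subset.refl F
  ltrans h₁ h₂ := Finset.Subset.trans h₁ h₂
  nonmpty := ⟨∅⟩
  directed F G := ⟨F ∪ G, Finset.subset_union_left, Finset.subset_union_right⟩
  D F := ⟨Localization (TT S F), inferInstance⟩
  alg F := locHomMZ (TT S F)
  tr h := locMap (TT_mono S h)
  tr_refl F x := Localization.induction_on x (fun y => by simp only [locMap_mk])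
  tr_trans h₁ h₂ x := Localization.induction_on x (fun y => by simp only [locMap_mk])
  tr_alg h b := by
    simp only [locHomMZ, MonoidWithZeroHom.coe_mk, ZeroHom.coe_mk, locMap_mk]
    exact congrArg (Localization.mk b) (Subtype.ext rfl)
  L := ⟨Localization S, inferInstance⟩
  algL := locHomMZ S
  incl F := locMap (TT_le_S S F)
  incl_alg F b := by
    simp only [locHomMZ, MonoidWithZeroHom.coe_mk, ZeroHom.coe_mk, locMap_mk]
    exact congrArg (Localization.mk b) (Subtype.ext rfl)
  incl_tr h x := Localization.induction_on x (fun y => by simp only [locMap_mk])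
  exists_rep x := by
    refine Localization.induction_on x ?_
    rintro ⟨a, s⟩
    have hs : (s : B) ∈ TT S {s} := Submonoid.subset_closure ⟨s, by simp, rfl⟩
    refine ⟨{s}, Localization.mk a ⟨(s : B), hs⟩, ?_⟩
    rw [locMap_mk]
  eq_stage F x y hxy := by
    obtain ⟨⟨a, t⟩, rfl⟩ : ∃ p : B × (TT S F), Localization.mk p.1 p.2 = x :=
      Localization.induction_on x (fun p => ⟨p, rfl⟩)
    obtain ⟨⟨b, u⟩, rfl⟩ : ∃ p : B × (TT S F), Localization.mk p.1 p.2 = y :=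
      Localization.induction_on y (fun p => ⟨p, rfl⟩)
    rw [locMap_mk, locMap_mk, Localization.mk_eq_mk_iff, Localization.r_iff_exists] at hxy
    obtain ⟨c, hc⟩ := hxy
    refine ⟨insert ⟨(c : B), c.2⟩ F, Finset.subset_insert _ F, ?_⟩
    have hcmem : (c : B) ∈ TT S (insert ⟨(c : B), c.2⟩ F) :=
      Submonoid.subset_closure ⟨⟨(c : B), c.2⟩, by simp, rfl⟩
    rw [locMap_mk, locMap_mk, Localization.mk_eq_mk_iff, Localization.r_iff_exists]
    exact ⟨⟨(c : B), hcmem⟩, hc⟩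

end Stmt17Aux


/-- If the localization map `B → S⁻¹B` of a commutative monoid with zero
is of finite presentation in the categorical sense, then `S⁻¹B ≅ B[h⁻¹]` for a single
element `h ∈ B`, compatibly with the maps from `B`; i.e. `S⁻¹B` is a finite
localization. -/
theorem stmt_17 {B : Type} [CommMonoidWithZero B] (S : Submonoid B)
    (H : IsCMZFinitePresentation (locHomMZ S)) :
    ∃ (h : B) (e : Localization S ≃* Localization (Submonoid.powers h)),
      ∀ b : B, e (Localization.mk b 1) = Localization.mk b 1 := by
  classical
  obtain ⟨Hsurj, -⟩ := H (Stmt17Aux.sys S)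
  obtain ⟨F, ψ, hψalg, hψincl⟩ :=
    Hsurj (MonoidWithZeroHom.id (Localization S)) (fun b => rfl)
  set T : Submonoid B := Stmt17Aux.TT S F with hT
  have hTle : T ≤ S := Stmt17Aux.TT_le_S S F
  -- ψ is a two-sided inverse of the inclusion `Localization T → Localization S`
  have hψid : ∀ x : Localization T, ψ (Stmt17Aux.locMap hTle x) = x := by
    intro x
    refine Stmt17Aux.loc_hom_ext (ψ.comp (Stmt17Aux.locMap hTle))
      (MonoidWithZeroHom.id _) ?_ x
    intro b
    show ψ (Stmt17Aux.locMap hTle (Localization.mk b 1)) = Localization.mk b 1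
    rw [Stmt17Aux.locMap_mk]
    have h1 : (Localization.mk b ⟨((1 : T) : B), hTle (1 : T).2⟩ : Localization S)
        = locHomMZ S b := congrArg (Localization.mk b) (Subtype.ext rfl)
    rw [h1]
    exact hψalg b
  have hinj : Function.Injective (Stmt17Aux.locMap hTle) := by
    intro x y hxy
    rw [← hψid x, ← hψid y, hxy]
  have hsurj : Function.Surjective (Stmt17Aux.locMap hTle) :=
    fun c => ⟨ψ c, hψincl c⟩
  let e₀ : Localization T ≃* Localization S :=
    MulEquiv.ofBijective (Stmt17Aux.locMap hTle) ⟨hinj, hsurj⟩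
  -- the single element
  set F' : Finset B := F.image Subtype.val with hF'
  set hh : B := F'.prod id with hhh
  have hTdef : T = Submonoid.closure (↑F' : Set B) := by
    exact congrArg Submonoid.closure Finset.coe_image.symm
  have hdvd : ∀ t ∈ T, ∃ (c : B) (n : ℕ), t * c = hh ^ n := by
    intro t ht
    rw [hTdef] at ht
    refine Submonoid.closure_induction ?_ ?_ ?_ ht
    · intro x hx
      exact ⟨(F'.erase x).prod id, 1, by
        rw [pow_one]; exact Finset.mul_prod_erase F' id hx⟩
    · exact ⟨1, 0, by rw [mul_one, pow_zero]⟩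
    · rintro x y hx hy ⟨c, n, hc⟩ ⟨d, m, hd⟩
      exact ⟨c * d, n + m, by rw [pow_add, ← hc, ← hd, mul_mul_mul_comm]⟩
  have hhmem : hh ∈ T := by
    rw [hTdef]
    exact Submonoid.prod_mem _ (fun x hx => Submonoid.subset_closure hx)
  have hple : Submonoid.powers hh ≤ T := Submonoid.powers_le.mpr hhmem
  set g : Localization (Submonoid.powers hh) →*₀ Localization T :=
    Stmt17Aux.locMap hple with hg
  have ginj : Function.Injective g := by
    intro x y hxy
    obtain ⟨⟨a, u⟩, rfl⟩ : ∃ p : B × (Submonoid.powers hh), Localization.mk p.1 p.2 = x :=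
      Localization.induction_on x (fun p => ⟨p, rfl⟩)
    obtain ⟨⟨b, v⟩, rfl⟩ : ∃ p : B × (Submonoid.powers hh), Localization.mk p.1 p.2 = y :=
      Localization.induction_on y (fun p => ⟨p, rfl⟩)
    rw [hg, Stmt17Aux.locMap_mk, Stmt17Aux.locMap_mk, Localization.mk_eq_mk_iff,
      Localization.r_iff_exists] at hxy
    obtain ⟨w, hw⟩ := hxy
    obtain ⟨c, k, hc⟩ := hdvd w w.2
    rw [Localization.mk_eq_mk_iff, Localization.r_iff_exists]
    refine ⟨⟨hh ^ k, k, rfl⟩, ?_⟩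
    show hh ^ k * ((v : B) * a) = hh ^ k * ((u : B) * b)
    calc hh ^ k * ((v : B) * a) = c * ((w : B) * ((v : B) * a)) := by
          rw [← hc, mul_comm (w : B) c, mul_assoc]
      _ = c * ((w : B) * ((u : B) * b)) := by rw [hw]
      _ = hh ^ k * ((u : B) * b) := by rw [← hc, mul_comm (w : B) c, mul_assoc]
  have gsurj : Function.Surjective g := by
    intro x
    obtain ⟨⟨a, t⟩, rfl⟩ : ∃ p : B × T, Localization.mk p.1 p.2 = x :=
      Localization.induction_on x (fun p => ⟨p, rfl⟩)
    obtain ⟨c, n, hc⟩ := hdvd t t.2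
    refine ⟨Localization.mk (a * c) ⟨hh ^ n, n, rfl⟩, ?_⟩
    rw [hg, Stmt17Aux.locMap_mk, Localization.mk_eq_mk_iff, Localization.r_iff_exists]
    refine ⟨1, ?_⟩
    show ((1 : T) : B) * ((t : B) * (a * c)) = ((1 : T) : B) * (hh ^ n * a)
    simp only [OneMemClass.coe_one, one_mul]
    rw [← hc, mul_comm a c, ← mul_assoc]
  let gE : Localization (Submonoid.powers hh) ≃* Localization T :=
    MulEquiv.ofBijective g ⟨ginj, gsurj⟩
  refine ⟨hh, e₀.symm.trans gE.symm, ?_⟩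
  intro b
  have he₀ : e₀ (Localization.mk b 1) = Localization.mk b 1 := by
    show Stmt17Aux.locMap hTle (Localization.mk b 1) = Localization.mk b 1
    rw [Stmt17Aux.locMap_mk]
    exact congrArg (Localization.mk b) (Subtype.ext rfl)
  have hgE : gE (Localization.mk b 1) = Localization.mk b 1 := by
    show g (Localization.mk b 1) = Localization.mk b 1
    rw [hg, Stmt17Aux.locMap_mk]
    exact congrArg (Localization.mk b) (Subtype.ext rfl)
  show gE.symm (e₀.symm (Localization.mk b 1)) = Localization.mk b 1
  have h1 : e₀.symm (Localization.mk b 1) = Localization.mk b 1 := by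
    rw [MulEquiv.symm_apply_eq, he₀]
  rw [h1, MulEquiv.symm_apply_eq, hgE]
end

section
/- Let B be a commutative ring, S ⊆ B a multiplicative subset, f : B → C and g : C → S⁻¹B ring homomorphisms with g ∘ f equal to the canonical localization map, and suppose Spec(f) : Spec C → Spec B is an open immersion. Let T = f(S). Then f induces an isomorphism of rings f_S : S⁻¹B → T⁻¹C. -/
open AlgebraicGeometry

/-- Let `B` be a commutative ring, `S ⊆ B` a multiplicative subset, and
`f : B →+* C`, `g : C →+* S⁻¹B` ring homomorphisms with `g ∘ f` the canonical localization
map. If `Spec f : Spec C → Spec B` is an open immersion then, with `T = f(S)`, the map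
`f` induces an isomorphism of rings `f_S : S⁻¹B → T⁻¹C`. -/
theorem stmt_19 {B C : Type} [CommRing B] [CommRing C] (S : Submonoid B)
    (f : B →+* C) (g : C →+* Localization S)
    (hgf : g.comp f = algebraMap B (Localization S))
    (hopen : IsOpenImmersion (Spec.map (CommRingCat.ofHom f))) :
    ∃ e : Localization S ≃+* Localization (S.map f.toMonoidHom),
      ∀ (b : B) (s : S), e (Localization.mk b s) =
        Localization.mk (f b) ⟨f s, Submonoid.mem_map_of_mem f.toMonoidHom s.2⟩ := by
  set T := S.map f.toMonoidHom with hT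
  -- f is an epimorphism of rings
  have hmono : CategoryTheory.Mono (Spec.map (CommRingCat.ofHom f)) := inferInstance
  have hmono' : CategoryTheory.Mono (Scheme.Spec.map (CommRingCat.ofHom f).op) := hmono
  have hmonoop : CategoryTheory.Mono (CommRingCat.ofHom f).op :=
    Scheme.Spec.mono_of_mono_map hmono'
  have hepi : CategoryTheory.Epi (CommRingCat.ofHom f) :=
    @CategoryTheory.unop_epi_of_mono _ _ _ _ (CommRingCat.ofHom f).op hmonoop
  have epi_prop : ∀ (h₁ h₂ : C →+* Localization T),
      h₁.comp f = h₂.comp f → h₁ = h₂ := by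
    intro h₁ h₂ h
    have := hepi.left_cancellation (Z := CommRingCat.of (Localization T)) (CommRingCat.ofHom h₁) (CommRingCat.ofHom h₂) (by rw [← CommRingCat.ofHom_comp, ← CommRingCat.ofHom_comp, h])
    exact congrArg CommRingCat.Hom.hom this
  have hle : S ≤ T.comap f.toMonoidHom := fun s hs => Submonoid.mem_map_of_mem _ hs
  -- ψ : Localization S → Localization T
  let ψ : Localization S →+* Localization T :=
    IsLocalization.map (Localization T) f hle
  -- g maps T to units
  have hg_unit : ∀ t : T, IsUnit (g t) := by
    rintro ⟨t, s, hs, rfl⟩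
    have : g (f s) = algebraMap B (Localization S) s := by
      rw [← hgf]; rfl
    show IsUnit (g (f s))
    rw [this]
    exact IsLocalization.map_units (Localization S) ⟨s, hs⟩
  let φ : Localization T →+* Localization S := IsLocalization.lift hg_unit
  have hφg : ∀ c : C, φ (algebraMap C (Localization T) c) = g c := fun c =>
    IsLocalization.lift_eq hg_unit c
  have hψ : ∀ b : B, ψ (algebraMap B (Localization S) b) = algebraMap C (Localization T) (f b) :=
    fun b => IsLocalization.map_eq hle b
  have hφψ : φ.comp ψ = RingHom.id (Localization S) := by
    apply IsLocalization.ringHom_ext S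
    ext b
    simp only [RingHom.comp_apply, RingHom.id_apply, hψ, hφg]
    rw [← hgf]; rfl
  have hψg : ψ.comp g = algebraMap C (Localization T) := by
    apply epi_prop
    ext b
    simp only [RingHom.comp_apply]
    rw [show g (f b) = algebraMap B (Localization S) b by rw [← hgf]; rfl, hψ]
  have hψφ : ψ.comp φ = RingHom.id (Localization T) := by
    apply IsLocalization.ringHom_ext T
    ext c
    simp only [RingHom.comp_apply, RingHom.id_apply, hφg]
    rw [← RingHom.comp_apply, hψg]
  refine ⟨RingEquiv.ofRingHom ψ φ hψφ hφψ, ?_⟩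
  intro b s
  show ψ (Localization.mk b s) = _
  rw [Localization.mk_eq_mk', Localization.mk_eq_mk']
  exact IsLocalization.map_mk' (g := f) hle b s
end
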